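/- Define real numbers d_1,…,d_n recursively by d_1 = −2β_2, d_i = −2β_{i+1} − 1/d_{i−1} for 2 ≤ i ≤ n−1, and d_n = −1/d_{n−1}. If d_i ≠ 0 for all 1 ≤ i ≤ n−1, then det(S) = d_1·d_2⋯d_n. -/

import Mathlib

open Polynomial Matrix

lemma sum_ite_coe {n : ℕ} (m : ℕ) (f : Fin n → ℝ) :
    (∑ k : Fin n, if (k:ℕ) = m then f k else 0) = if h : m < n then f ⟨m, h⟩ else 0 := by
  split
  · next h =>
    rw [Finset.sum_eq_single_of_mem ⟨m, h⟩ (Finset.mem_univ _)]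
    · simp
    · intro b _ hb
      rw [if_neg]
      exact fun hk => hb (Fin.ext hk)
  · next h =>
    apply Finset.sum_eq_zero
    intro k _
    rw [if_neg]
    exact fun hk => h (hk ▸ k.isLt)

set_option maxHeartbeats 4000000 in
theorem stmt_2 (n : ℕ) (hn : 2 ≤ n) (β : ℕ → ℝ)
    (hβ : ∀ i, 1 ≤ i → i ≤ n → β i = 1 ∨ β i = -1)
    (S : Matrix (Fin n) (Fin n) ℝ)
    (hS : ∀ i j : Fin n, S i j = if i = j then 0 else β (max (i : ℕ) (j : ℕ) + 1))
    (d : ℕ → ℝ)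
    (hd1 : d 1 = -2 * β 2)
    (hdi : ∀ i, 2 ≤ i → i ≤ n - 1 → d i = -2 * β (i + 1) - 1 / d (i - 1))
    (hdn : d n = -1 / d (n - 1))
    (hne : ∀ i, 1 ≤ i → i ≤ n - 1 → d i ≠ 0) :
    S.det = ∏ i ∈ Finset.Icc 1 n, d i := by
  set e : ℕ → ℝ := fun k => β (k + 2) / d (k + 1) with he
  set M : Matrix (Fin n) (Fin n) ℝ :=
    Matrix.of fun i j => if i = j then 1 else if (j:ℕ) = (i:ℕ) + 1 then -1 else 0 with hM
  set L : Matrix (Fin n) (Fin n) ℝ :=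
    Matrix.of fun i j => if i = j then 1 else if (i:ℕ) = (j:ℕ) + 1 then e (j:ℕ) else 0 with hL
  set D : Matrix (Fin n) (Fin n) ℝ := Matrix.diagonal (fun k : Fin n => d ((k:ℕ) + 1)) with hD
  -- entry formula for M * S
  have hMS : ∀ j : Fin n, ∀ (A : Matrix (Fin n) (Fin n) ℝ), ∀ i : Fin n,
      (M * A) i j = A i j - (if h : (i:ℕ) + 1 < n then A ⟨(i:ℕ)+1, h⟩ j else 0) := by
    intro j A i
    rw [Matrix.mul_apply]
    have step : ∀ k : Fin n, M i k * A k j =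
        (if k = i then A k j else 0) + (if (k:ℕ) = (i:ℕ) + 1 then -A k j else 0) := by
      intro k
      simp only [hM, Matrix.of_apply]
      by_cases h1 : i = k
      · subst h1
        simp
      · rw [if_neg (show ¬k = i from fun h => h1 h.symm)]
        rw [if_neg h1]
        split <;> ring
    rw [Finset.sum_congr rfl (fun k _ => step k), Finset.sum_add_distrib,
      Finset.sum_ite_eq' Finset.univ i (fun k => A k j), sum_ite_coe ((i:ℕ)+1) (fun k => -A k j)]
    simp only [Finset.mem_univ, if_true]
    split <;> ring
  -- entry formula for L * D * Lᵀ
  have hRHS : ∀ i j : Fin n, (L * D * Lᵀ) i j =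
      d ((i:ℕ)+1) * L j i +
        (if h : 1 ≤ (i:ℕ) then e ((i:ℕ)-1) * d (i:ℕ) * L j ⟨(i:ℕ)-1, lt_of_le_of_lt (Nat.sub_le _ _) i.isLt⟩ else 0) := by
    intro i j
    rw [Matrix.mul_apply]
    have step : ∀ k : Fin n, (L * D) i k * Lᵀ k j =
        (if k = i then d ((i:ℕ)+1) * L j i else 0) +
          (if (k:ℕ) = (i:ℕ) - 1 ∧ 1 ≤ (i:ℕ) then e (k:ℕ) * d ((k:ℕ)+1) * L j k else 0) := by
      intro k
      rw [Matrix.mul_diagonal, Matrix.transpose_apply]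
      simp only [hL, Matrix.of_apply]
      by_cases h1 : i = k
      · subst h1
        have : ¬((i:ℕ) = (i:ℕ) - 1 ∧ 1 ≤ (i:ℕ)) := by omega
        rw [if_pos rfl, if_pos rfl, if_neg this]
        ring
      · rw [if_neg (show ¬k = i from fun h => h1 h.symm), if_neg h1]
        by_cases h2 : (i:ℕ) = (k:ℕ) + 1
        · have hc : (k:ℕ) = (i:ℕ) - 1 ∧ 1 ≤ (i:ℕ) := by omega
          rw [if_pos h2, if_pos hc]
          ring
        · have hc : ¬((k:ℕ) = (i:ℕ) - 1 ∧ 1 ≤ (i:ℕ)) := by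
            rintro ⟨h3, h4⟩; exact h2 (by omega)
          rw [if_neg h2, if_neg hc]
          ring
    rw [Finset.sum_congr rfl (fun k _ => step k), Finset.sum_add_distrib,
      Finset.sum_ite_eq' Finset.univ i (fun _ => d ((i:ℕ)+1) * L j i)]
    simp only [Finset.mem_univ, if_true]
    congr 1
    by_cases h4 : 1 ≤ (i:ℕ)
    · have : ∀ k : Fin n, (if (k:ℕ) = (i:ℕ) - 1 ∧ 1 ≤ (i:ℕ) then e (k:ℕ) * d ((k:ℕ)+1) * L j k else 0)
          = (if (k:ℕ) = (i:ℕ) - 1 then e (k:ℕ) * d ((k:ℕ)+1) * L j k else 0) := by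
        intro k; simp [h4]
      rw [Finset.sum_congr rfl (fun k _ => this k),
        sum_ite_coe ((i:ℕ)-1) (fun k => e (k:ℕ) * d ((k:ℕ)+1) * L j k)]
      have hlt : (i:ℕ) - 1 < n := lt_of_le_of_lt (Nat.sub_le _ _) i.isLt
      rw [dif_pos hlt, dif_pos h4]
      have : (i:ℕ) - 1 + 1 = (i:ℕ) := by omega
      rw [this]
    · simp [h4]
  -- the key identity
  have hMt : ∀ (A : Matrix (Fin n) (Fin n) ℝ) (i j : Fin n), (A * Mᵀ) i j =
      A i j - (if h : (j:ℕ) + 1 < n then A i ⟨(j:ℕ)+1, h⟩ else 0) := by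
    intro A i j
    have h0 : (A * Mᵀ) i j = (M * Aᵀ) j i := by
      rw [← Matrix.transpose_apply (M * Aᵀ), Matrix.transpose_mul, Matrix.transpose_transpose]
    rw [h0, hMS i Aᵀ j]
    simp [Matrix.transpose_apply]
  set s : ℕ → ℕ → ℝ := fun a b => if a = b then 0 else if a < b then β (b+1) else β (a+1) with hs
  have hS' : ∀ i j : Fin n, S i j = s (i:ℕ) (j:ℕ) := by
    intro i j
    rw [hS]
    simp only [hs]
    by_cases h : i = j
    · simp [h]
    · have h' : ¬(i:ℕ) = (j:ℕ) := fun hh => h (Fin.ext hh)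
      rw [if_neg h, if_neg h']
      rcases Nat.lt_or_ge (i:ℕ) (j:ℕ) with hlt | hge
      · rw [if_pos hlt, Nat.max_eq_right (le_of_lt hlt)]
      · rw [if_neg (by omega), Nat.max_eq_left hge]
  have hβsq : ∀ m, 2 ≤ m → m ≤ n → β m * β m = 1 := by
    intro m h1 h2
    rcases hβ m (by omega) h2 with h | h <;> rw [h] <;> norm_num
  have key : M * S * Mᵀ = L * D * Lᵀ := by
    ext i j
    obtain ⟨a, ha⟩ := i
    obtain ⟨b, hb⟩ := j
    rw [hMt (M * S) _ _, hMS _ S _, hRHS _ _]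
    simp only [hMS, hS', hL, Matrix.of_apply, Fin.ext_iff, he, hs]
    try simp only [Fin.val_mk]
    by_cases hab : a = b
    · subst hab
      by_cases h1 : a + 1 < n
      · by_cases h0 : 1 ≤ a
        · -- diagonal, generic row
          rw [show a - 1 + 2 = a + 1 by omega, show a - 1 + 1 = a by omega]
          have hd : d a ≠ 0 := hne a h0 (by omega)
          have hdia : d (a+1) = -2 * β (a+2) - 1 / d a := by
            have := hdi (a+1) (by omega) (by omega)
            rwa [Nat.add_sub_cancel] at this
          have hb2 : β (a+1) * β (a+1) = 1 := hβsq _ (by omega) (by omega)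
          split_ifs <;> first
            | (exfalso; omega)
            | (exfalso; assumption)
            | (rw [hdia]; field_simp; ring_nf; ring_nf at hb2; linarith [hb2])
        · -- diagonal, first row
          have h0' : a = 0 := by omega
          subst h0'
          split_ifs <;> first
            | (exfalso; omega)
            | (exfalso; assumption)
            | (rw [hd1]; ring)
      · -- diagonal, last row
        rw [show a - 1 + 2 = a + 1 by omega, show a - 1 + 1 = a by omega,
          show a + 1 = n by omega, show a = n - 1 by omega]
        have hd : d (n-1) ≠ 0 := hne (n-1) (by omega) (by omega)
        have hb2 : β n * β n = 1 := hβsq _ (by omega) (by omega)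
        split_ifs <;> first
          | (exfalso; omega)
          | (exfalso; assumption)
          | (rw [hdn]; field_simp; ring_nf; ring_nf at hb2; linarith [hb2])
    · by_cases hb1 : b = a + 1
      · -- superdiagonal
        subst hb1
        have hd : d (a+1) ≠ 0 := hne (a+1) (by omega) (by omega)
        have hd' : d (1+a) ≠ 0 := by rwa [add_comm]
        split_ifs
        all_goals try (exfalso; omega)
        all_goals try (exfalso; assumption)
        all_goals try ring
        all_goals (field_simp; try rw [mul_assoc, mul_inv_cancel₀ hd', mul_one])
      · by_cases ha1 : a = b + 1
        · -- subdiagonal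
          subst ha1
          rw [show b + 1 - 1 + 2 = b + 2 by omega, show b + 1 - 1 + 1 = b + 1 by omega]
          have hd : d (b+1) ≠ 0 := hne (b+1) (by omega) (by omega)
          have hd' : d (1+b) ≠ 0 := by rwa [add_comm]
          split_ifs
          all_goals try (exfalso; omega)
          all_goals try (exfalso; assumption)
          all_goals try ring
          all_goals (field_simp; try rw [mul_assoc, mul_inv_cancel₀ hd', mul_one])
        · -- far off-diagonal
          split_ifs <;> first
            | (exfalso; omega)
            | (exfalso; assumption)
            | ring
  -- determinant computations
  have hdetM : M.det = 1 := by
    have ht : M.BlockTriangular id := by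
      intro i j hij
      simp only [id_eq] at hij
      simp only [hM, Matrix.of_apply]
      rw [if_neg (by exact fun h => absurd (h ▸ hij) (lt_irrefl _)), if_neg (by omega)]
    rw [Matrix.det_of_upperTriangular ht]
    apply Finset.prod_eq_one
    intro i _
    simp [hM]
  have hdetL : L.det = 1 := by
    have ht : L.BlockTriangular OrderDual.toDual := by
      intro i j hij
      have hij' : (i:ℕ) < (j:ℕ) := hij
      simp only [hL, Matrix.of_apply]
      rw [if_neg (by exact fun h => absurd (h ▸ hij') (lt_irrefl _)), if_neg (by omega)]
    rw [Matrix.det_of_lowerTriangular L ht]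
    apply Finset.prod_eq_one
    intro i _
    simp [hL]
  have hdetD : D.det = ∏ i ∈ Finset.Icc 1 n, d i := by
    rw [hD, Matrix.det_diagonal]
    rw [Fin.prod_univ_eq_prod_range (fun i => d (i+1)), ← Finset.Ico_add_one_right_eq_Icc,
      Finset.prod_Ico_eq_prod_range]
    simp [add_comm]
  have := congrArg Matrix.det key
  rw [Matrix.det_mul, Matrix.det_mul, Matrix.det_mul, Matrix.det_mul,
    Matrix.det_transpose, Matrix.det_transpose, hdetM, hdetL, hdetD] at this
  linarith [this]
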